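/- For every n ≥ 0 and every x, (x+r)^n = Σ_{k=0}^{n} U_r(n,k) · Π_{i=0}^{k-1} (x - i²), as an identity of polynomials. -/
import Mathlib


/-- `centralU r n k` is the r-central factorial number with even indices of the second kind. -/
def centralU (r : ℕ) : ℕ → ℕ → ℤ
  | 0, 0 => 1
  | 0, _ + 1 => 0
  | n + 1, 0 => (r : ℤ) ^ (n + 1)
  | n + 1, k + 1 => centralU r n k + (((k : ℤ) + 1) ^ 2 + r) * centralU r n (k + 1)

lemma centralU_zero (r n : ℕ) : centralU r n 0 = (r : ℤ) ^ n := by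
  cases n with
  | zero => simp [centralU]
  | succ m => rfl

lemma centralU_eq_zero (r : ℕ) : ∀ n k, n < k → centralU r n k = 0 := by
  intro n
  induction n with
  | zero =>
    intro k hk
    cases k with
    | zero => omega
    | succ m => rfl
  | succ n ih =>
    intro k hk
    match k, hk with
    | k + 1, hk =>
      show centralU r n k + (((k : ℤ) + 1) ^ 2 + r) * centralU r n (k + 1) = 0
      rw [ih k (by omega), ih (k + 1) (by omega)]
      ring

theorem centralU_connection (r n : ℕ) (x : ℝ) :
    (x + r) ^ n =
      ∑ k ∈ Finset.range (n + 1),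
        (centralU r n k : ℝ) * ∏ i ∈ Finset.range k, (x - (i : ℝ) ^ 2) := by
  induction n with
  | zero => simp [centralU]
  | succ n ih =>
    have expand : ∀ k ∈ Finset.range (n + 1),
        (centralU r n k : ℝ) * (∏ i ∈ Finset.range k, (x - (i : ℝ) ^ 2)) * (x + r)
        = (centralU r n k : ℝ) * (∏ i ∈ Finset.range (k + 1), (x - (i : ℝ) ^ 2))
          + ((k : ℝ) ^ 2 + r) * (centralU r n k : ℝ)
            * (∏ i ∈ Finset.range k, (x - (i : ℝ) ^ 2)) := by
      intro k _
      rw [Finset.prod_range_succ]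
      ring
    rw [pow_succ, ih, Finset.sum_mul, Finset.sum_congr rfl expand,
      Finset.sum_add_distrib]
    -- rewrite second sum by peeling off the k = 0 term
    rw [Finset.sum_range_succ' (fun k => ((k : ℝ) ^ 2 + r) * (centralU r n k : ℝ)
      * (∏ i ∈ Finset.range k, (x - (i : ℝ) ^ 2))) n]
    -- rewrite the target sum by peeling off the k = 0 term
    rw [Finset.sum_range_succ' (fun k => (centralU r (n + 1) k : ℝ)
      * (∏ i ∈ Finset.range k, (x - (i : ℝ) ^ 2))) (n + 1)]
    simp only [centralU_zero, Finset.prod_range_zero, mul_one, Nat.cast_zero]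
    push_cast
    -- extend sum over range n to range (n+1) using vanishing term
    rw [show (∑ i ∈ Finset.range n, (((i : ℝ) + 1) ^ 2 + r) * (centralU r n (i + 1) : ℝ)
        * (∏ j ∈ Finset.range (i + 1), (x - (j : ℝ) ^ 2)))
      = ∑ i ∈ Finset.range (n + 1), (((i : ℝ) + 1) ^ 2 + r) * (centralU r n (i + 1) : ℝ)
        * (∏ j ∈ Finset.range (i + 1), (x - (j : ℝ) ^ 2)) from by
        rw [Finset.sum_range_succ, centralU_eq_zero r n (n + 1) (by omega)]
        simp]
    have hrec : ∀ i ∈ Finset.range (n + 1),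
        (centralU r (n + 1) (i + 1) : ℝ) * (∏ j ∈ Finset.range (i + 1), (x - (j : ℝ) ^ 2))
        = (centralU r n i : ℝ) * (∏ j ∈ Finset.range (i + 1), (x - (j : ℝ) ^ 2))
          + (((i : ℝ) + 1) ^ 2 + r) * (centralU r n (i + 1) : ℝ)
            * (∏ j ∈ Finset.range (i + 1), (x - (j : ℝ) ^ 2)) := by
      intro i _
      show ((centralU r n i + (((i : ℤ) + 1) ^ 2 + r) * centralU r n (i + 1) : ℤ) : ℝ) * _ = _
      push_cast
      ring
    rw [Finset.sum_congr rfl hrec, Finset.sum_add_distrib]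
    ring
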